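/- Let Cat(m) = C(2m,m)/(m+1). Let T : ℕ → ℚ and let d : ℕ → ℚ satisfy d(0) = 0 and, for every q ≥ 0, d(q+1) = T(q+1) + 2·Σ_{k=0}^{q} Cat(q−k)·d(k). Then for every q ≥ 0, d(q+1) = Σ_{k=1}^{q} ( 4^{q+1−k} − Σ_{s=0}^{q−k} 2·4^{s}·Cat(q−k−s) )·T(k) + T(q+1). -/

import Mathlib

open Finset

lemma qcat_eq (n : ℕ) :
    ((Nat.choose (2 * n) n : ℚ) / ((n : ℕ) + 1)) = (catalan n : ℚ) := by
  have h : ((n : ℚ) + 1) * (catalan n : ℚ) = (Nat.centralBinom n : ℚ) := by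
    exact_mod_cast succ_mul_catalan_eq_centralBinom n
  rw [Nat.centralBinom_eq_two_mul_choose] at h
  have hne : ((n : ℚ) + 1) ≠ 0 := by positivity
  field_simp
  linarith [h]

lemma key_cb (i : ℕ) : (Nat.centralBinom i : ℚ) = ((i : ℚ) + 1) * (catalan i : ℚ) := by
  exact_mod_cast (succ_mul_catalan_eq_centralBinom i).symm

lemma cb_succ (n : ℕ) :
    (Nat.centralBinom (n + 1) : ℚ) = 4 * (Nat.centralBinom n : ℚ) - 2 * (catalan n : ℚ) := by
  have h' : ((n : ℚ) + 1) * (Nat.centralBinom (n + 1) : ℚ)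
      = 2 * (2 * (n : ℚ) + 1) * (Nat.centralBinom n : ℚ) := by
    exact_mod_cast Nat.succ_mul_centralBinom_succ n
  have hc' : ((n : ℚ) + 1) * (catalan n : ℚ) = (Nat.centralBinom n : ℚ) :=
    (key_cb n).symm
  have hne : ((n : ℚ) + 1) ≠ 0 := by positivity
  have hg : ((n : ℚ) + 1) * (Nat.centralBinom (n + 1) : ℚ)
      = ((n : ℚ) + 1) * (4 * (Nat.centralBinom n : ℚ) - 2 * (catalan n : ℚ)) := by
    linear_combination h' + 2 * hc'
  exact mul_left_cancel₀ hne hg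

lemma Q1 (i : ℕ) : (Nat.centralBinom i : ℚ)
    = 4 ^ i - ∑ s ∈ range i, 2 * (4 : ℚ) ^ s * (catalan (i - 1 - s) : ℚ) := by
  induction i with
  | zero => simp [Nat.centralBinom]
  | succ n ih =>
    have hs : ∑ s ∈ range (n + 1), 2 * (4 : ℚ) ^ s * (catalan (n - s) : ℚ)
        = 4 * (∑ s ∈ range n, 2 * (4 : ℚ) ^ s * (catalan (n - 1 - s) : ℚ))
          + 2 * (catalan n : ℚ) := by
      rw [Finset.sum_range_succ']
      congr 1
      · rw [Finset.mul_sum]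
        apply Finset.sum_congr rfl
        intro s _
        have h : n - (s + 1) = n - 1 - s := by omega
        rw [h]; ring
      · simp
    simp only [Nat.add_sub_cancel]
    rw [cb_succ n, ih, hs]; ring

lemma catalan_succ_range (n : ℕ) : (catalan (n + 1) : ℚ)
    = ∑ i ∈ range (n + 1), (catalan i : ℚ) * (catalan (n - i) : ℚ) := by
  have h := catalan_succ' n
  rw [Finset.Nat.sum_antidiagonal_eq_sum_range_succ_mk] at h
  exact_mod_cast h

lemma K2 (n : ℕ) :
    2 * ∑ i ∈ range (n + 1), (catalan (n - i) : ℚ) * (Nat.centralBinom i : ℚ)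
      = (Nat.centralBinom (n + 1) : ℚ) := by
  have hrefl : ∑ i ∈ range (n + 1), (catalan (n - i) : ℚ) * (Nat.centralBinom i : ℚ)
      = ∑ i ∈ range (n + 1), (catalan i : ℚ) * (Nat.centralBinom (n - i) : ℚ) := by
    rw [← Finset.sum_range_reflect]
    apply Finset.sum_congr rfl
    intro i hi
    simp only [Finset.mem_range] at hi
    have h1 : n + 1 - 1 - i = n - i := by omega
    have h2 : n - (n - i) = i := by omega
    rw [h1, h2]
  have h2S : 2 * ∑ i ∈ range (n + 1), (catalan (n - i) : ℚ) * (Nat.centralBinom i : ℚ)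
      = ((n : ℚ) + 2) * ∑ i ∈ range (n + 1), (catalan i : ℚ) * (catalan (n - i) : ℚ) := by
    rw [two_mul]
    nth_rewrite 2 [hrefl]
    rw [← Finset.sum_add_distrib, Finset.mul_sum]
    apply Finset.sum_congr rfl
    intro i hi
    simp only [Finset.mem_range] at hi
    rw [key_cb i, key_cb (n - i)]
    have hcast : ((n - i : ℕ) : ℚ) = (n : ℚ) - (i : ℚ) := by
      have : i ≤ n := by omega
      push_cast [this]; ring
    rw [hcast]; ring
  rw [h2S, ← catalan_succ_range, key_cb (n + 1)]
  push_cast; ring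

lemma main_formula (T d : ℕ → ℚ) (h0 : d 0 = 0)
    (hrec : ∀ q : ℕ, d (q + 1) = T (q + 1) +
      2 * ∑ k ∈ range (q + 1), (catalan (q - k) : ℚ) * d k) :
    ∀ n : ℕ, d n = ∑ k ∈ Icc 1 n, (Nat.centralBinom (n - k) : ℚ) * T k := by
  intro n
  induction n using Nat.strong_induction_on with
  | _ n ih =>
    match n with
    | 0 => simpa using h0
    | q + 1 =>
      rw [hrec q]
      have hdk : ∀ k ∈ range (q + 1), (catalan (q - k) : ℚ) * d k
          = ∑ j ∈ Icc 1 k, (catalan (q - k) : ℚ) * ((Nat.centralBinom (k - j) : ℚ) * T j) := by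
        intro k hk
        simp only [Finset.mem_range] at hk
        rw [ih k (by omega), Finset.mul_sum]
      rw [Finset.sum_congr rfl hdk]
      rw [Finset.sum_comm' (t' := Icc 1 q) (s' := fun j => Icc j q)
        (by intro k j; simp only [Finset.mem_range, Finset.mem_Icc]; omega)]
      rw [Finset.sum_Icc_succ_top (by omega : 1 ≤ q + 1), Nat.sub_self]
      simp only [Nat.centralBinom_zero, Nat.cast_one, one_mul]
      rw [Finset.mul_sum]
      rw [add_comm]
      congr 1
      apply Finset.sum_congr rfl
      intro j hj
      simp only [Finset.mem_Icc] at hj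
      have hinner : ∑ k ∈ Icc j q, (catalan (q - k) : ℚ) * ((Nat.centralBinom (k - j) : ℚ) * T j)
          = (∑ i ∈ range (q - j + 1), (catalan (q - j - i) : ℚ) * (Nat.centralBinom i : ℚ)) * T j := by
        have hIcc : Icc j q = Ico j (q + 1) := by
          rw [Finset.Ico_add_one_right_eq_Icc]
        rw [hIcc, Finset.sum_Ico_eq_sum_range]
        have hlen : q + 1 - j = q - j + 1 := by omega
        rw [hlen, Finset.sum_mul]
        apply Finset.sum_congr rfl
        intro i hi
        simp only [Finset.mem_range] at hi
        have h1 : q - (j + i) = q - j - i := by omega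
        have h2 : j + i - j = i := by omega
        rw [h1, h2]; ring
      rw [hinner]
      have hqj : q + 1 - j = q - j + 1 := by omega
      rw [hqj, ← K2 (q - j)]
      ring

theorem perturbative_lemma_step2 (T d : ℕ → ℚ)
    (h0 : d 0 = 0)
    (hrec : ∀ q : ℕ, d (q + 1) = T (q + 1) +
      2 * ∑ k ∈ Finset.range (q + 1),
        ((Nat.choose (2 * (q - k)) (q - k) : ℚ) / ((q - k : ℕ) + 1)) * d k) :
    ∀ q : ℕ, d (q + 1) =
      (∑ k ∈ Finset.Icc 1 q,
        ((4 : ℚ) ^ (q + 1 - k) -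
          ∑ s ∈ Finset.range (q - k + 1),
            2 * (4 : ℚ) ^ s *
              ((Nat.choose (2 * (q - k - s)) (q - k - s) : ℚ) / ((q - k - s : ℕ) + 1))) * T k)
      + T (q + 1) := by
  have hrec' : ∀ q : ℕ, d (q + 1) = T (q + 1) +
      2 * ∑ k ∈ range (q + 1), (catalan (q - k) : ℚ) * d k := by
    intro q
    rw [hrec q]
    congr 2
    apply Finset.sum_congr rfl
    intro k _
    rw [qcat_eq]
  intro q
  rw [main_formula T d h0 hrec' (q + 1)]
  rw [Finset.sum_Icc_succ_top (by omega : 1 ≤ q + 1), Nat.sub_self]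
  simp only [Nat.centralBinom_zero, Nat.cast_one, one_mul]
  simp only [qcat_eq]
  congr 1
  apply Finset.sum_congr rfl
  intro k hk
  simp only [Finset.mem_Icc] at hk
  rw [Q1 (q + 1 - k)]
  have h1 : q + 1 - k = q - k + 1 := by omega
  rw [h1]
  have h2 : ∀ s : ℕ, q - k + 1 - 1 - s = q - k - s := fun s => by omega
  simp only [h2]
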